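/- Let A, B be positive invertible operators with 0 < mI ≤ A, B ≤ MI, h = M/m > 1, ν ∈ [0,1], r = min{ν, 1−ν}. Then h·√M·L(√M, √m)·log S(√h) · I ≥ (1−ν)A + νB − A♯_ν B − 2r((A+B)/2 − A♯_{1/2}B) in the Loewner order. -/

import Mathlib

set_option maxHeartbeats 1000000
set_option synthInstance.maxHeartbeats 200000

variable {H : Type*} [NormedAddCommGroup H] [InnerProductSpace ℂ H] [CompleteSpace H]

/-- The weighted operator geometric mean `A ♯_ν B = A^{1/2} (A^{-1/2} B A^{-1/2})^ν A^{1/2}`. -/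
noncomputable def geomMean (A B : H →L[ℂ] H) (ν : ℝ) : H →L[ℂ] H :=
  A ^ ((1:ℝ)/2) * (A ^ (-(1:ℝ)/2) * B * A ^ (-(1:ℝ)/2)) ^ ν * A ^ ((1:ℝ)/2)

/-- Specht's ratio `S(h) = h^{1/(h-1)} / (e log h^{1/(h-1)})` for `h ≠ 1`, with `S(1) = 1`. -/
noncomputable def specht (h : ℝ) : ℝ :=
  if h = 1 then 1
  else h ^ ((1:ℝ)/(h-1)) / (Real.exp 1 * Real.log (h ^ ((1:ℝ)/(h-1))))

/-- The logarithmic mean `L(x,y) = (y-x)/(log y - log x)` for `x ≠ y`, with `L(x,x) = x`. -/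
noncomputable def logMean (x y : ℝ) : ℝ :=
  if x = y then x else (y - x) / (Real.log y - Real.log x)


/-- `Λ u = L(1,u)`, the logarithmic mean of `1` and `u`. -/
noncomputable def Lam (u : ℝ) : ℝ := if u = 1 then 1 else (u - 1) / Real.log u

lemma Lam_of_ne (u : ℝ) (hu : u ≠ 1) : Lam u = (u - 1) / Real.log u := if_neg hu

lemma one_le_Lam {u : ℝ} (hu : 1 ≤ u) : 1 ≤ Lam u := by
  rcases eq_or_lt_of_le hu with h | h
  · simp [Lam, ← h]
  · rw [Lam_of_ne u (ne_of_gt h)]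
    have hlog : 0 < Real.log u := Real.log_pos h
    rw [le_div_iff₀ hlog, one_mul]
    have := Real.log_le_sub_one_of_pos (lt_trans one_pos h)
    linarith

lemma Lam_mul_log {u : ℝ} (hu : 1 < u) : Lam u * Real.log u = u - 1 := by
  rw [Lam_of_ne u (ne_of_gt hu), div_mul_cancel₀]
  exact ne_of_gt (Real.log_pos hu)

lemma Lam_mono {u v : ℝ} (hu : 1 ≤ u) (huv : u ≤ v) : Lam u ≤ Lam v := by
  rcases eq_or_lt_of_le hu with h | h
  · rw [← h]; simpa [Lam] using one_le_Lam (le_trans hu huv)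
  · have hv : 1 < v := lt_of_lt_of_le h huv
    rw [Lam_of_ne u (ne_of_gt h), Lam_of_ne v (ne_of_gt hv)]
    have hlu : 0 < Real.log u := Real.log_pos h
    have hlv : 0 < Real.log v := Real.log_pos hv
    rw [div_le_div_iff₀ hlu hlv]
    have hu0 : (0:ℝ) < u := lt_trans one_pos h
    have hv0 : (0:ℝ) < v := lt_trans one_pos hv
    have h1 : u * (Real.log v - Real.log u) ≤ v - u := by
      have hvu : Real.log (v / u) ≤ v / u - 1 := Real.log_le_sub_one_of_pos (div_pos hv0 hu0)
      rw [Real.log_div hv0.ne' hu0.ne'] at hvu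
      have := mul_le_mul_of_nonneg_left hvu hu0.le
      calc u * (Real.log v - Real.log u) ≤ u * (v / u - 1) := this
        _ = v - u := by field_simp
    have h2 : u - 1 ≤ u * Real.log u := by
      have h1u : Real.log u⁻¹ ≤ u⁻¹ - 1 := Real.log_le_sub_one_of_pos (inv_pos.2 hu0)
      rw [Real.log_inv] at h1u
      have := mul_le_mul_of_nonneg_left h1u hu0.le
      have hne : u * u⁻¹ = 1 := mul_inv_cancel₀ hu0.ne'
      nlinarith
    nlinarith [mul_le_mul_of_nonneg_left h1 (sub_nonneg.2 h.le),
      mul_le_mul_of_nonneg_left h2 (sub_nonneg.2 huv), hu0, hlu]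

/-- `F L = 1 - L + L log L` is monotone on `[1, ∞)`. -/
lemma F_mono {L₁ L₂ : ℝ} (h1 : 1 ≤ L₁) (h12 : L₁ ≤ L₂) :
    1 - L₁ + L₁ * Real.log L₁ ≤ 1 - L₂ + L₂ * Real.log L₂ := by
  have hL1 : (0:ℝ) < L₁ := lt_of_lt_of_le one_pos h1
  have hL2 : (0:ℝ) < L₂ := lt_of_lt_of_le hL1 h12
  have key : 1 - L₁ / L₂ ≤ Real.log L₂ - Real.log L₁ := by
    have := Real.log_le_sub_one_of_pos (div_pos hL1 hL2)
    rw [Real.log_div hL1.ne' hL2.ne'] at this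
    linarith
  have hlog1 : 0 ≤ Real.log L₁ := Real.log_nonneg h1
  have hmul := mul_le_mul_of_nonneg_left key hL2.le
  have hfrac : L₂ * (L₁ / L₂) = L₁ := by field_simp
  nlinarith [mul_le_mul_of_nonneg_left h12 hlog1]

lemma F_nonneg {L : ℝ} (h : 1 ≤ L) : 0 ≤ 1 - L + L * Real.log L := by
  have := F_mono le_rfl h
  simpa using this

/-- tangent-line bound: `1 + μ(u-1) - u^μ ≤ 1 - Λ(u) + Λ(u) log Λ(u)` for `u ≥ 1`. -/
lemma tangent_bound {u : ℝ} (hu : 1 ≤ u) (μ : ℝ) :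
    1 + μ * (u - 1) - u ^ μ ≤ 1 - Lam u + Lam u * Real.log (Lam u) := by
  rcases eq_or_lt_of_le hu with h | h
  · rw [← h]; simp [Lam, Real.one_rpow]
  · set L := Lam u with hL
    have hL1 : 1 ≤ L := one_le_Lam hu
    have hL0 : (0:ℝ) < L := lt_of_lt_of_le one_pos hL1
    have hu0 : (0:ℝ) < u := lt_trans one_pos h
    have hrpow : u ^ μ = Real.exp (μ * Real.log u) := by
      rw [Real.rpow_def_of_pos hu0, mul_comm]
    have hexp : L * (μ * Real.log u - Real.log L + 1) ≤ u ^ μ := by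
      have := Real.add_one_le_exp (μ * Real.log u - Real.log L)
      have h2 := mul_le_mul_of_nonneg_left this hL0.le
      calc L * (μ * Real.log u - Real.log L + 1)
          ≤ L * Real.exp (μ * Real.log u - Real.log L) := h2
        _ = u ^ μ := by
            rw [Real.exp_sub, Real.exp_log hL0, hrpow]
            field_simp
    have hLlog : L * Real.log u = u - 1 := Lam_mul_log h
    have expand : L * (μ * Real.log u - Real.log L + 1)
        = μ * (L * Real.log u) - L * Real.log L + L := by ring
    rw [expand, hLlog] at hexp
    linarith

/-- Young's inequality for two reals. -/
lemma young_scalar {u μ : ℝ} (hu : 0 ≤ u) (h0 : 0 ≤ μ) (h1 : μ ≤ 1) :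
    u ^ μ ≤ 1 + μ * (u - 1) := by
  have h := Real.geom_mean_le_arith_mean2_weighted (by linarith : (0:ℝ) ≤ 1 - μ) h0
    zero_le_one hu (by ring)
  rw [Real.one_rpow, one_mul] at h
  linarith


lemma scalar_core (t : ℝ) (ht : 1 < t) {u : ℝ} (μ : ℝ) (h1 : 1 ≤ u) (h2 : u ≤ t) :
    1 + μ * (u - 1) - u ^ μ ≤ 1 - Lam t + Lam t * Real.log (Lam t) :=
  (tangent_bound h1 μ).trans (F_mono (one_le_Lam h1) (Lam_mono h1 h2))

lemma reflect {y : ℝ} (hy : 0 < y) (μ : ℝ) :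
    1 + μ * (y - 1) - y ^ μ = y * (1 + (1 - μ) * (1/y - 1) - (1/y) ^ (1 - μ)) := by
  have h1 : (1/y) ^ (1 - μ) = y ^ (μ - 1) := by
    rw [one_div, Real.inv_rpow hy.le, ← Real.rpow_neg hy.le, neg_sub]
  have h2 : y * y ^ (μ - 1) = y ^ μ := by
    have := Real.rpow_add hy 1 (μ - 1)
    rw [Real.rpow_one] at this
    rw [← this]; norm_num
  rw [h1]
  calc 1 + μ * (y - 1) - y ^ μ
      = y * 1 + (1 - μ) * (y * (1/y) - y) - y ^ μ := by
        rw [mul_one_div_cancel hy.ne']; ring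
    _ = y * 1 + (1 - μ) * (y * (1/y) - y) - y * y ^ (μ - 1) := by rw [h2]
    _ = y * (1 + (1 - μ) * (1/y - 1) - y ^ (μ - 1)) := by ring

lemma scalar_main (t : ℝ) (ht : 1 < t) (ν : ℝ) (hν0 : 0 ≤ ν) (hν1 : ν ≤ 1)
    (x : ℝ) (hx1 : 1/(t*t) ≤ x) (hx2 : x ≤ t*t) :
    (1 - ν) + ν*x - x ^ ν - 2*(min ν (1-ν))*((1+x)/2 - Real.sqrt x)
      ≤ t * (1 - Lam t + Lam t * Real.log (Lam t)) := by
  have ht0 : (0:ℝ) < t := lt_trans one_pos ht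
  have hx0 : (0:ℝ) < x := lt_of_lt_of_le (by positivity) hx1
  set y := Real.sqrt x with hy
  have hy0 : (0:ℝ) < y := Real.sqrt_pos.2 hx0
  have hyx : y * y = x := Real.mul_self_sqrt hx0.le
  have hyt : y ≤ t := by
    have := Real.sqrt_le_sqrt hx2
    rwa [Real.sqrt_mul_self ht0.le] at this
  have hty : 1/t ≤ y := by
    have h0 : Real.sqrt (1/(t*t)) = 1/t := by
      rw [show 1/(t*t) = (1/t)*(1/t) by ring]
      exact Real.sqrt_mul_self (by positivity)
    have := Real.sqrt_le_sqrt hx1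
    rwa [h0] at this
  have hxν : x ^ ν = y ^ (2*ν) := by
    rw [← hyx, Real.mul_rpow hy0.le hy0.le, show 2*ν = ν + ν by ring,
      Real.rpow_add hy0]
  have hFt : 0 ≤ 1 - Lam t + Lam t * Real.log (Lam t) := F_nonneg (one_le_Lam ht.le)
  set F : ℝ := 1 - Lam t + Lam t * Real.log (Lam t) with hF
  rcases le_or_gt ν (1/2) with hc | hc
  · -- r = ν
    rw [min_eq_left (by linarith)]
    have hEq : (1 - ν) + ν*x - x ^ ν - 2*ν*((1+x)/2 - y)
        = 1 + (2*ν) * (y - 1) - y ^ (2*ν) := by rw [hxν]; ring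
    rw [hEq]
    rcases le_or_gt 1 y with hy1 | hy1
    · exact (scalar_core t ht (2*ν) hy1 hyt).trans (le_mul_of_one_le_left hFt ht.le)
    · rw [reflect hy0 (2*ν)]
      have hiy1 : 1 ≤ 1/y := by rw [le_div_iff₀ hy0, one_mul]; exact hy1.le
      have hiyt : 1/y ≤ t := by
        rw [div_le_iff₀ hy0]
        rw [div_le_iff₀ ht0] at hty
        linarith [hty]
      have hDpos : 0 ≤ 1 + (1 - 2*ν) * (1/y - 1) - (1/y) ^ (1 - 2*ν) := by
        have := young_scalar (u := 1/y) (μ := 1 - 2*ν) (by positivity) (by linarith) (by linarith)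
        linarith
      have hDle : 1 + (1 - 2*ν) * (1/y - 1) - (1/y) ^ (1 - 2*ν) ≤ F :=
        scalar_core t ht (1 - 2*ν) hiy1 hiyt
      calc y * (1 + (1 - 2*ν) * (1/y - 1) - (1/y) ^ (1 - 2*ν))
          ≤ 1 * F := mul_le_mul hy1.le hDle hDpos zero_le_one
        _ ≤ t * F := by nlinarith
  · -- r = 1 - ν
    rw [min_eq_right (by linarith)]
    have h1 : (1/y) ^ (2 - 2*ν) = y ^ (2*ν - 2) := by
      rw [one_div, Real.inv_rpow hy0.le, ← Real.rpow_neg hy0.le, neg_sub]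
    have h2 : (y * y) * y ^ (2*ν - 2) = y ^ (2*ν) := by
      have ha := Real.rpow_add hy0 2 (2*ν - 2)
      have hb : y ^ (2:ℝ) = y * y := by
        rw [show (2:ℝ) = ((2:ℕ):ℝ) by norm_num, Real.rpow_natCast]; ring
      rw [show (2:ℝ) + (2*ν - 2) = 2*ν by ring, hb] at ha
      rw [← ha]
    have hEq : (1 - ν) + ν*x - x ^ ν - 2*(1-ν)*((1+x)/2 - y)
        = x * (1 + (2 - 2*ν) * (1/y - 1) - (1/y) ^ (2 - 2*ν)) := by
      rw [h1, hxν, ← hyx]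
      have hc1 : (y*y) * (1/y) = y := by field_simp
      calc (1 - ν) + ν*(y*y) - y ^ (2*ν) - 2*(1-ν)*((1+y*y)/2 - y)
          = (y*y) + (2 - 2*ν) * (y - (y*y)) - y ^ (2*ν) := by ring
        _ = (y*y) + (2 - 2*ν) * ((y*y)*(1/y) - (y*y)) - (y*y) * y ^ (2*ν-2) := by
            rw [hc1, h2]
        _ = (y*y) * (1 + (2 - 2*ν) * (1/y - 1) - y ^ (2*ν-2)) := by ring
    rw [hEq]
    rcases le_or_gt y 1 with hy1 | hy1
    · have hx1' : x ≤ 1 := by nlinarith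
      have hiy1 : 1 ≤ 1/y := by rw [le_div_iff₀ hy0, one_mul]; exact hy1
      have hiyt : 1/y ≤ t := by
        rw [div_le_iff₀ hy0]
        rw [div_le_iff₀ ht0] at hty
        linarith [hty]
      have hDpos : 0 ≤ 1 + (2 - 2*ν) * (1/y - 1) - (1/y) ^ (2 - 2*ν) := by
        have := young_scalar (u := 1/y) (μ := 2 - 2*ν) (by positivity) (by linarith) (by linarith)
        linarith
      have hDle : 1 + (2 - 2*ν) * (1/y - 1) - (1/y) ^ (2 - 2*ν) ≤ F :=
        scalar_core t ht (2 - 2*ν) hiy1 hiyt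
      calc x * (1 + (2 - 2*ν) * (1/y - 1) - (1/y) ^ (2 - 2*ν))
          ≤ 1 * F := mul_le_mul hx1' hDle hDpos zero_le_one
        _ ≤ t * F := by nlinarith
    · have hrefl := reflect (y := 1/y) (by positivity) (2 - 2*ν)
      rw [one_div_one_div] at hrefl
      rw [hrefl, show (1 - (2 - 2*ν)) = 2*ν - 1 by ring]
      have hxy : x * (1/y) = y := by rw [← hyx]; field_simp
      rw [show x * (1/y * (1 + (2*ν - 1) * (y - 1) - y ^ (2*ν - 1)))
          = (x * (1/y)) * (1 + (2*ν - 1) * (y - 1) - y ^ (2*ν - 1)) by ring, hxy]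
      have hDpos : 0 ≤ 1 + (2*ν - 1) * (y - 1) - y ^ (2*ν - 1) := by
        have := young_scalar (u := y) (μ := 2*ν - 1) hy0.le (by linarith) (by linarith)
        linarith
      have hDle : 1 + (2*ν - 1) * (y - 1) - y ^ (2*ν - 1) ≤ F :=
        scalar_core t ht (2*ν - 1) hy1.le hyt
      exact mul_le_mul hyt hDle hDpos ht0.le


section Aux

lemma log_specht {t : ℝ} (ht : 1 < t) :
    Real.log (specht t) = (Lam t)⁻¹ - 1 + Real.log (Lam t) := by
  have ht0 : (0:ℝ) < t := lt_trans one_pos ht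
  have htlog : 0 < Real.log t := Real.log_pos ht
  have ht1 : (0:ℝ) < t - 1 := by linarith
  have hnum : 0 < t ^ ((1:ℝ)/(t-1)) := Real.rpow_pos_of_pos ht0 _
  have hlognum : Real.log (t ^ ((1:ℝ)/(t-1))) = 1/(t-1) * Real.log t := by
    rw [Real.log_rpow ht0]
  have hlam : 0 < 1/(t-1) * Real.log t := mul_pos (by positivity) htlog
  rw [specht, if_neg (ne_of_gt ht)]
  rw [Real.log_div hnum.ne' (by rw [hlognum]; exact (mul_pos (Real.exp_pos 1) hlam).ne')]
  rw [Real.log_mul (Real.exp_ne_zero 1) (by rw [hlognum]; exact hlam.ne'), Real.log_exp,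
    hlognum]
  have hinv : 1/(t-1) * Real.log t = (Lam t)⁻¹ := by
    rw [Lam_of_ne t (ne_of_gt ht)]
    field_simp
  rw [hinv, Real.log_inv]
  ring

lemma const_eq {m M : ℝ} (hm : 0 < m) (hmM : m < M) :
    (M / m) * Real.sqrt M * logMean (Real.sqrt M) (Real.sqrt m) *
      Real.log (specht (Real.sqrt (M / m)))
      = M * (Real.sqrt (M/m) * (1 - Lam (Real.sqrt (M/m)) +
          Lam (Real.sqrt (M/m)) * Real.log (Lam (Real.sqrt (M/m))))) := by
  have hM : (0:ℝ) < M := hm.trans hmM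
  set a := Real.sqrt m with hadef
  set b := Real.sqrt M with hbdef
  set t := Real.sqrt (M/m) with htdef
  have ha : 0 < a := Real.sqrt_pos.2 hm
  have hb : 0 < b := Real.sqrt_pos.2 hM
  have hab : a < b := Real.sqrt_lt_sqrt hm.le hmM
  have ht : t = b / a := by rw [htdef, hadef, hbdef, Real.sqrt_div hM.le]
  have ht1 : 1 < t := by rw [ht, lt_div_iff₀ ha]; linarith
  have hlogt : 0 < Real.log t := Real.log_pos ht1
  have hL : Lam t = (t - 1) / Real.log t := Lam_of_ne t (ne_of_gt ht1)
  have hL0 : (0:ℝ) < Lam t := lt_of_lt_of_le one_pos (one_le_Lam ht1.le)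
  have hlS : Real.log (specht t) = (Lam t)⁻¹ - 1 + Real.log (Lam t) := log_specht ht1
  have hlm : logMean b a = a * Lam t := by
    rw [logMean, if_neg hab.ne']
    have h1 : Real.log b - Real.log a = Real.log t := by
      rw [ht, Real.log_div hb.ne' ha.ne']
    have h2 : a * Lam t = (b - a) / Real.log t := by
      rw [hL, show t - 1 = (b - a)/a by rw [ht]; field_simp, div_div]
      rw [eq_div_iff hlogt.ne']
      field_simp
    rw [h2, ← h1, show a - b = -(b-a) by ring,
      show Real.log a - Real.log b = -(Real.log b - Real.log a) by ring, neg_div_neg_eq]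
  have hm' : a * a = m := Real.mul_self_sqrt hm.le
  have hM' : b * b = M := Real.mul_self_sqrt hM.le
  set L := Lam t with hLdef
  rw [hlm, hlS, ← hm', ← hM', ht]
  field_simp [hL0.ne']

lemma op_smul_nonneg {c : ℝ} (hc : 0 ≤ c) {x : H →L[ℂ] H} (hx : 0 ≤ x) :
    (0:H →L[ℂ] H) ≤ c • x := by
  have h := star_left_conjugate_nonneg hx (Real.sqrt c • (1:H →L[ℂ] H))
  rwa [star_smul, star_trivial, star_one, smul_mul_assoc, one_mul, smul_mul_assoc,
    mul_smul_comm, mul_one, smul_smul, Real.mul_self_sqrt hc] at h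

lemma op_smul_le {c : ℝ} (hc : 0 ≤ c) {x y : H →L[ℂ] H} (h : x ≤ y) :
    c • x ≤ c • y := by
  rw [← sub_nonneg, ← smul_sub]
  exact op_smul_nonneg hc (sub_nonneg.2 h)

end Aux

open scoped NNReal

theorem reverse_diff_refined_young_operator (A B : H →L[ℂ] H)
    (hAu : IsUnit A) (hBu : IsUnit B) (m M : ℝ) (hm : 0 < m) (hmM : m < M)
    (hmA : m • (1 : H →L[ℂ] H) ≤ A) (hAM : A ≤ M • (1 : H →L[ℂ] H))
    (hmB : m • (1 : H →L[ℂ] H) ≤ B) (hBM : B ≤ M • (1 : H →L[ℂ] H))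
    (ν : ℝ) (hν : ν ∈ Set.Icc (0:ℝ) 1) (r : ℝ) (hr : r = min ν (1 - ν)) :
    (1 - ν) • A + ν • B - geomMean A B ν -
        (2 * r) • ((1/2 : ℝ) • (A + B) - geomMean A B (1/2)) ≤
      ((M / m) * Real.sqrt M * logMean (Real.sqrt M) (Real.sqrt m) *
        Real.log (specht (Real.sqrt (M / m)))) • (1 : H →L[ℂ] H) := by
  obtain ⟨hν0, hν1⟩ := hν
  have hM : (0:ℝ) < M := hm.trans hmM
  have h1nn : (0:H →L[ℂ] H) ≤ 1 := zero_le_one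
  have hA0 : (0:H →L[ℂ] H) ≤ A := le_trans (op_smul_nonneg hm.le h1nn) hmA
  have hB0 : (0:H →L[ℂ] H) ≤ B := le_trans (op_smul_nonneg hm.le h1nn) hmB
  have hAnn : (0:ℝ≥0) ∉ spectrum ℝ≥0 A := (spectrum.zero_notMem_iff ℝ≥0).mpr hAu
  set S1 : H →L[ℂ] H := A ^ ((1:ℝ)/2) with hS1def
  set S2 : H →L[ℂ] H := A ^ (-(1:ℝ)/2) with hS2def
  have hS1nn : (0:H →L[ℂ] H) ≤ S1 := CFC.rpow_nonneg
  have hS2nn : (0:H →L[ℂ] H) ≤ S2 := CFC.rpow_nonneg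
  have hS1sa : star S1 = S1 := (IsSelfAdjoint.of_nonneg hS1nn).star_eq
  have hS2sa : star S2 = S2 := (IsSelfAdjoint.of_nonneg hS2nn).star_eq
  have hS12 : S1 * S2 = 1 := by
    rw [hS1def, hS2def, ← CFC.rpow_add hAu,
      show (1:ℝ)/2 + -(1:ℝ)/2 = 0 by norm_num, CFC.rpow_zero A]
  have hS21 : S2 * S1 = 1 := by
    rw [hS1def, hS2def, ← CFC.rpow_add hAu,
      show -(1:ℝ)/2 + (1:ℝ)/2 = 0 by norm_num, CFC.rpow_zero A]
  have hS11 : S1 * S1 = A := by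
    rw [hS1def, ← CFC.rpow_add hAu, show (1:ℝ)/2 + (1:ℝ)/2 = 1 by norm_num,
      CFC.rpow_one A]
  have hSAS : S2 * A * S2 = 1 := by
    conv_lhs => rw [← hS11]
    rw [show S2 * (S1 * S1) * S2 = (S2 * S1) * (S1 * S2) by noncomm_ring, hS21, hS12, one_mul]
  set X : H →L[ℂ] H := S2 * B * S2 with hXdef
  have hX0 : (0:H →L[ℂ] H) ≤ X := by
    have := star_left_conjugate_nonneg hB0 S2
    rwa [hS2sa] at this
  have hXsa : IsSelfAdjoint X := .of_nonneg hX0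
  have hBA : B ≤ (M/m) • A := by
    have h3 : (0:H →L[ℂ] H) ≤ (M/m) • (A - m • 1) :=
      op_smul_nonneg (by positivity) (sub_nonneg.2 hmA)
    have h2 : (0:H →L[ℂ] H) ≤ M • 1 - B := sub_nonneg.2 hBM
    have key : (M/m) • (A - m • (1:H →L[ℂ] H)) + (M • 1 - B) = (M/m) • A - B := by
      rw [smul_sub, smul_smul, div_mul_cancel₀ M hm.ne']
      abel
    have := add_nonneg h3 h2
    rw [key] at this
    exact sub_nonneg.1 this
  have hAB : (m/M) • A ≤ B := by
    have h3 : (0:H →L[ℂ] H) ≤ (m/M) • (M • 1 - A) :=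
      op_smul_nonneg (by positivity) (sub_nonneg.2 hAM)
    have h2 : (0:H →L[ℂ] H) ≤ B - m • 1 := sub_nonneg.2 hmB
    have key : (m/M) • (M • (1:H →L[ℂ] H) - A) + (B - m • 1) = B - (m/M) • A := by
      rw [smul_sub, smul_smul, div_mul_cancel₀ m hM.ne']
      abel
    have := add_nonneg h3 h2
    rw [key] at this
    exact sub_nonneg.1 this
  have hXup : X ≤ (M/m) • 1 := by
    have h := star_left_conjugate_le_conjugate hBA S2
    rw [hS2sa] at h
    calc X ≤ S2 * ((M/m) • A) * S2 := h
      _ = (M/m) • (S2 * A * S2) := by rw [mul_smul_comm, smul_mul_assoc]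
      _ = (M/m) • 1 := by rw [hSAS]
  have hXlo : (m/M) • 1 ≤ X := by
    have h := star_left_conjugate_le_conjugate hAB S2
    rw [hS2sa] at h
    calc (m/M) • (1:H →L[ℂ] H) = (m/M) • (S2 * A * S2) := by rw [hSAS]
      _ = S2 * ((m/M) • A) * S2 := by rw [mul_smul_comm, smul_mul_assoc]
      _ ≤ X := h
  have hspec : spectrum ℝ X ⊆ Set.Icc (m/M) (M/m) := by
    intro x hx
    constructor
    · exact (algebraMap_le_iff_le_spectrum (R := ℝ) (a := X) hXsa).mp
        (by rwa [Algebra.algebraMap_eq_smul_one]) x hx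
    · exact (le_algebraMap_iff_spectrum_le (R := ℝ) (a := X) hXsa).mp
        (by rwa [Algebra.algebraMap_eq_smul_one]) x hx
  have hpos : ∀ x ∈ spectrum ℝ X, 0 < x := fun x hx =>
    lt_of_lt_of_le (by positivity) (hspec hx).1
  have hrpow_cfc : ∀ e : ℝ, X ^ e = cfc (fun x : ℝ => x ^ e) X := by
    intro e
    rw [CFC.rpow_def, cfc_nnreal_eq_real (fun x : ℝ≥0 => x ^ e) X hX0]
    apply cfc_congr
    intro x hx
    have hx0 : 0 < x := hpos x hx
    simp [NNReal.coe_rpow, Real.coe_toNNReal x hx0.le]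
  have hcont : ∀ e : ℝ, ContinuousOn (fun x : ℝ => x ^ e) (spectrum ℝ X) := fun e x hx =>
    (Real.continuousAt_rpow_const x e (Or.inl (hpos x hx).ne')).continuousWithinAt
  set t : ℝ := Real.sqrt (M/m) with htdef
  set c : ℝ := t * (1 - Lam t + Lam t * Real.log (Lam t)) with hcdef
  have hMm1 : 1 < M/m := (one_lt_div hm).2 hmM
  have ht1 : 1 < t := by
    rw [htdef, show (1:ℝ) = Real.sqrt 1 by rw [Real.sqrt_one]]
    exact Real.sqrt_lt_sqrt zero_le_one hMm1
  have htt : t * t = M/m := Real.mul_self_sqrt (by positivity)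
  have hc0 : 0 ≤ c := mul_nonneg (by linarith) (F_nonneg (one_le_Lam ht1.le))
  set g : ℝ → ℝ :=
    fun x => ((1 - ν) + ν * x - x ^ ν) - (2*r) * ((1/2) * (1 + x) - x ^ ((1:ℝ)/2)) with hgdef
  have hgle : ∀ x ∈ spectrum ℝ X, g x ≤ c := by
    intro x hx
    have h1 := (hspec hx).1
    have h2 := (hspec hx).2
    have hlo : 1/(t*t) ≤ x := by rw [htt, one_div_div]; exact h1
    have hhi : x ≤ t*t := by rw [htt]; exact h2
    have hmain := scalar_main t ht1 ν hν0 hν1 x hlo hhi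
    have heq : g x = (1 - ν) + ν*x - x ^ ν
        - 2*(min ν (1-ν))*((1+x)/2 - Real.sqrt x) := by
      rw [hgdef, hr, Real.sqrt_eq_rpow]
      ring
    rw [heq]
    exact hmain
  have hgcont : ContinuousOn g (spectrum ℝ X) := by
    apply ContinuousOn.sub
    · apply ContinuousOn.sub
      · exact (continuous_const.add (continuous_const.mul continuous_id)).continuousOn
      · exact hcont ν
    · apply ContinuousOn.mul continuousOn_const
      apply ContinuousOn.sub
      · exact (continuous_const.mul (continuous_const.add continuous_id)).continuousOn
      · exact hcont ((1:ℝ)/2)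
  have e1 : cfc (fun x : ℝ => (1-ν) + ν*x) X = (1-ν) • 1 + ν • X := by
    rw [cfc_add X (fun _ => (1-ν)) (fun x => ν*x) continuousOn_const
      ((continuous_const.mul continuous_id).continuousOn),
      cfc_const (1-ν) X hXsa, cfc_const_mul_id ν X hXsa, Algebra.algebraMap_eq_smul_one]
  have e2 : cfc (fun x : ℝ => (1-ν) + ν*x - x ^ ν) X = (1-ν) • 1 + ν • X - X ^ ν := by
    rw [cfc_sub (fun x => (1-ν) + ν*x) (fun x => x ^ ν) X
      ((continuous_const.add (continuous_const.mul continuous_id)).continuousOn) (hcont ν),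
      e1, ← hrpow_cfc ν]
  have e3 : cfc (fun x : ℝ => (1/2)*(1+x) - x ^ ((1:ℝ)/2)) X
      = (1/2:ℝ) • (1 + X) - X ^ ((1:ℝ)/2) := by
    rw [cfc_sub (fun x => (1/2)*(1+x)) (fun x => x ^ ((1:ℝ)/2)) X
      ((continuous_const.mul (continuous_const.add continuous_id)).continuousOn)
      (hcont ((1:ℝ)/2)), ← hrpow_cfc ((1:ℝ)/2)]
    congr 1
    rw [cfc_const_mul (1/2:ℝ) (fun x => 1 + x) X
      ((continuous_const.add continuous_id).continuousOn)]
    congr 1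
    rw [cfc_add X (fun _ => (1:ℝ)) (fun x => x) continuousOn_const
      continuous_id.continuousOn, cfc_const (1:ℝ) X hXsa, cfc_id' ℝ X hXsa, map_one]
  have e4 : cfc g X = ((1-ν) • 1 + ν • X - X ^ ν)
      - (2*r) • ((1/2:ℝ) • (1 + X) - X ^ ((1:ℝ)/2)) := by
    rw [hgdef]
    rw [cfc_sub (fun x => (1-ν) + ν*x - x ^ ν)
      (fun x => (2*r) * ((1/2)*(1+x) - x ^ ((1:ℝ)/2))) X
      (((continuous_const.add (continuous_const.mul continuous_id)).continuousOn).sub (hcont ν))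
      (continuousOn_const.mul (((continuous_const.mul
        (continuous_const.add continuous_id)).continuousOn).sub (hcont ((1:ℝ)/2)))),
      cfc_const_mul (2*r) (fun x => (1/2)*(1+x) - x ^ ((1:ℝ)/2)) X
      (((continuous_const.mul (continuous_const.add continuous_id)).continuousOn).sub
        (hcont ((1:ℝ)/2))), e2, e3]
  have hEle : ((1-ν) • 1 + ν • X - X ^ ν)
      - (2*r) • ((1/2:ℝ) • (1 + X) - X ^ ((1:ℝ)/2)) ≤ c • 1 := by
    have h := cfc_le_algebraMap g c X hgle hgcont hXsa
    rwa [e4, Algebra.algebraMap_eq_smul_one] at h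
  have hsxs : S1 * X * S1 = B := by
    rw [hXdef, show S1 * (S2*B*S2) * S1 = (S1*S2)*B*(S2*S1) by noncomm_ring, hS12, hS21,
      one_mul, mul_one]
  have hgm1 : geomMean A B ν = S1 * X ^ ν * S1 := rfl
  have hgm2 : geomMean A B (1/2) = S1 * X ^ ((1:ℝ)/2) * S1 := rfl
  have hkey : (1 - ν) • A + ν • B - geomMean A B ν -
      (2 * r) • ((1/2 : ℝ) • (A + B) - geomMean A B (1/2))
      = S1 * (((1-ν) • 1 + ν • X - X ^ ν)
        - (2*r) • ((1/2:ℝ) • (1 + X) - X ^ ((1:ℝ)/2))) * S1 := by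
    rw [hgm1, hgm2]
    have expand : S1 * (((1-ν) • (1:H →L[ℂ] H) + ν • X - X ^ ν)
        - (2*r) • ((1/2:ℝ) • (1 + X) - X ^ ((1:ℝ)/2))) * S1
        = ((1-ν) • (S1*S1) + ν • (S1*X*S1) - S1*(X ^ ν)*S1)
          - (2*r) • ((1/2:ℝ) • (S1*S1 + S1*X*S1) - S1*(X ^ ((1:ℝ)/2))*S1) := by
      simp only [mul_sub, sub_mul, mul_add, add_mul, mul_smul_comm, smul_mul_assoc,
        mul_one, one_mul]
    rw [expand, hS11, hsxs]
  rw [hkey]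
  have step1 : S1 * (((1-ν) • 1 + ν • X - X ^ ν)
      - (2*r) • ((1/2:ℝ) • (1 + X) - X ^ ((1:ℝ)/2))) * S1 ≤ S1 * (c • 1) * S1 := by
    have h := star_left_conjugate_le_conjugate hEle S1
    rwa [hS1sa] at h
  have step2 : S1 * (c • (1:H →L[ℂ] H)) * S1 = c • A := by
    rw [mul_smul_comm, smul_mul_assoc, mul_one, hS11]
  have step3 : c • A ≤ (c*M) • 1 := by
    have h := op_smul_le hc0 hAM
    rwa [smul_smul] at h
  have hcM : c * M = (M / m) * Real.sqrt M * logMean (Real.sqrt M) (Real.sqrt m) *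
      Real.log (specht t) := by
    rw [hcdef, htdef, const_eq hm hmM]
    ring
  calc S1 * (((1-ν) • 1 + ν • X - X ^ ν)
      - (2*r) • ((1/2:ℝ) • (1 + X) - X ^ ((1:ℝ)/2))) * S1
      ≤ S1 * (c • 1) * S1 := step1
    _ = c • A := step2
    _ ≤ (c*M) • 1 := step3
    _ = ((M / m) * Real.sqrt M * logMean (Real.sqrt M) (Real.sqrt m) *
        Real.log (specht t)) • 1 := by rw [hcM]
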